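/- Let n and d be positive integers, ℓ a Kupisch series of type Ã_{n-1}, f(i) = i - ℓ(i) - d + 1, and I = { i ∈ ℤ : (i mod n) ∈ J }. If i, j ∈ I are adjacent in I (that is, i < j and no element of I lies strictly between i and j), then f(i) < f(j) and f(i), f(j) are adjacent in I. -/

import Mathlib

/-- The set of periodic points of the induced map `f̄ : ℤ/nℤ → ℤ/nℤ`. -/
def Jset (n : ℕ) (fbar : ZMod n → ZMod n) : Set (ZMod n) :=
  {j | ∃ N : ℕ, 1 ≤ N ∧ fbar^[N] j = j}

/-- The set of integers whose residue mod `n` lies in `J`. -/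
def Iset (n : ℕ) (fbar : ZMod n → ZMod n) : Set ℤ :=
  {i | (i : ZMod n) ∈ Jset n fbar}

/-- if `i < j` are adjacent elements of `I` then `f i < f j` and
`f i`, `f j` are adjacent elements of `I`. -/
theorem f_preserves_adjacency (n d : ℕ) (hn : 0 < n) (hd : 0 < d) (ℓ : ℤ → ℤ)
    (hK1 : ∀ i : ℤ, 1 ≤ ℓ i) (hK2 : ∀ i : ℤ, ℓ i ≤ ℓ (i - 1) + 1)
    (hKper : ∀ i : ℤ, ℓ (i + n) = ℓ i)
    (f : ℤ → ℤ) (hf : ∀ i : ℤ, f i = i - ℓ i - d + 1)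
    (fbar : ZMod n → ZMod n)
    (hfbar : ∀ i : ℤ, fbar (i : ZMod n) = ((f i : ℤ) : ZMod n))
    (i j : ℤ) (hi : i ∈ Iset n fbar) (hj : j ∈ Iset n fbar)
    (hij : i < j) (hadj : ∀ k ∈ Iset n fbar, ¬(i < k ∧ k < j)) :
    f i < f j ∧ f i ∈ Iset n fbar ∧ f j ∈ Iset n fbar ∧
      ∀ k ∈ Iset n fbar, ¬(f i < k ∧ k < f j) := by
  -- f is weakly monotone
  have hmono : Monotone f := by
    apply monotone_int_of_le_succ
    intro m
    have h2 := hK2 (m + 1)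
    simp only [add_sub_cancel_right] at h2
    rw [hf m, hf (m + 1)]
    linarith
  -- ℓ is n-periodic (all integer multiples)
  have hper : ∀ t : ℤ, ∀ m : ℤ, ℓ (m + t * n) = ℓ m := by
    intro t
    induction t using Int.induction_on with
    | zero => simp
    | succ k ih =>
      intro m
      have h1 : m + ((k : ℤ) + 1) * n = (m + k * n) + n := by ring
      rw [h1, hKper, ih]
    | pred k ih =>
      intro m
      have h1 : m + (-(k : ℤ) - 1) * n = (m - n) + (-(k : ℤ)) * n := by ring
      have h2 : ℓ (m - n + n) = ℓ (m - n) := hKper (m - n)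
      simp only [sub_add_cancel] at h2
      rw [h1, ih, ← h2]
  have hfn : ∀ t m : ℤ, f (m + t * n) = f m + t * n := by
    intro t m
    rw [hf, hf, hper]
    ring
  -- iterates of fbar compute iterates of f mod n
  have hbar_iter : ∀ N : ℕ, ∀ m : ℤ, fbar^[N] (m : ZMod n) = ((f^[N] m : ℤ) : ZMod n) := by
    intro N
    induction N with
    | zero => intro m; simp
    | succ N ih =>
      intro m
      rw [Function.iterate_succ_apply, Function.iterate_succ_apply, hfbar, ih]
  -- Iset is f-invariant
  have hinv : ∀ m ∈ Iset n fbar, f m ∈ Iset n fbar := by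
    intro m ⟨N, hN1, hNfix⟩
    refine ⟨N, hN1, ?_⟩
    have : fbar^[N] ((f m : ℤ) : ZMod n) = fbar^[N] (fbar (m : ZMod n)) := by rw [hfbar]
    rw [this, ← Function.iterate_succ_apply, Function.iterate_succ_apply', hNfix, hfbar]
  -- every element of Iset has an f-preimage in Iset
  have hpre : ∀ k ∈ Iset n fbar, ∃ m ∈ Iset n fbar, f m = k := by
    intro k ⟨N, hN1, hNfix⟩
    obtain ⟨M, rfl⟩ : ∃ M, N = M + 1 := ⟨N - 1, (Nat.succ_pred_eq_of_pos hN1).symm⟩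
    set m0 : ℤ := f^[M] k with hm0
    have hcast : ((f m0 : ℤ) : ZMod n) = (k : ZMod n) := by
      have h1 : fbar^[M + 1] (k : ZMod n) = fbar ((m0 : ℤ) : ZMod n) := by
        rw [Function.iterate_succ_apply', hbar_iter]
      rw [← hNfix, h1, hfbar]
    have hdvd : (n : ℤ) ∣ k - f m0 := by
      have := (ZMod.intCast_eq_intCast_iff _ _ _).mp hcast
      exact this.dvd
    obtain ⟨t, ht⟩ := hdvd
    refine ⟨m0 + t * n, ?_, ?_⟩
    · -- m0 + t*n ∈ Iset
      have hres : ((m0 + t * n : ℤ) : ZMod n) = ((m0 : ℤ) : ZMod n) := by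
        push_cast
        simp [ZMod.natCast_self]
      refine ⟨M + 1, hN1, ?_⟩
      rw [hres]
      have h1 : ((m0 : ℤ) : ZMod n) = fbar^[M] (k : ZMod n) := (hbar_iter M k).symm
      rw [h1, ← Function.iterate_add_apply, Nat.add_comm, Function.iterate_add_apply, hNfix]
    · rw [hfn t m0]
      linarith [ht]
  -- strict inequality
  have hlt : f i < f j := by
    rcases lt_or_eq_of_le (hmono hij.le) with h | h
    · exact h
    · exfalso
      obtain ⟨Ni, hNi1, hNifix⟩ := hi
      obtain ⟨Nj, hNj1, hNjfix⟩ := hj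
      set N := Ni * Nj with hN
      have hN1 : 1 ≤ N := Nat.one_le_iff_ne_zero.mpr (by positivity)
      have hfixi : fbar^[N] (i : ZMod n) = (i : ZMod n) := by
        rw [hN, Function.iterate_mul]
        exact Function.iterate_fixed hNifix Nj
      have hfixj : fbar^[N] (j : ZMod n) = (j : ZMod n) := by
        rw [hN, Nat.mul_comm, Function.iterate_mul]
        exact Function.iterate_fixed hNjfix Ni
      obtain ⟨M, hM⟩ : ∃ M, N = M + 1 := ⟨N - 1, (Nat.succ_pred_eq_of_pos hN1).symm⟩
      have hiter_eq : f^[N] i = f^[N] j := by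
        rw [hM, Function.iterate_succ_apply, Function.iterate_succ_apply, h]
      have hcongr : ((i : ℤ) : ZMod n) = ((j : ℤ) : ZMod n) := by
        rw [← hfixi, ← hfixj, hbar_iter, hbar_iter, hiter_eq]
      have hdvd : (n : ℤ) ∣ j - i := ((ZMod.intCast_eq_intCast_iff _ _ _).mp hcongr).dvd
      obtain ⟨t, ht⟩ := hdvd
      have hnpos : (0 : ℤ) < n := by exact_mod_cast hn
      have ht1 : 1 ≤ t := by nlinarith
      rcases eq_or_lt_of_le ht1 with h1 | h1
      · -- j = i + n, so f j = f i + n > f i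
        have : j = i + 1 * n := by rw [← h1] at ht; linarith
        rw [this, hfn 1 i] at h
        omega
      · -- i + n strictly between i and j
        have hiI : i + 1 * n ∈ Iset n fbar := by
          obtain ⟨Ni', hNi1', hfix'⟩ := (⟨Ni, hNi1, hNifix⟩ : (i : ZMod n) ∈ Jset n fbar)
          refine ⟨Ni', hNi1', ?_⟩
          have hres : ((i + 1 * n : ℤ) : ZMod n) = ((i : ℤ) : ZMod n) := by
            push_cast
            simp [ZMod.natCast_self]
          rw [hres, hfix']
        refine hadj _ hiI ⟨by omega, by nlinarith⟩
  refine ⟨hlt, hinv i hi, hinv j hj, ?_⟩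
  intro k hk ⟨h1, h2⟩
  obtain ⟨m, hm, hfm⟩ := hpre k hk
  rcases le_or_gt m i with hmi | hmi
  · have := hmono hmi
    omega
  rcases le_or_gt j m with hjm | hjm
  · have := hmono hjm
    omega
  exact hadj m hm ⟨hmi, hjm⟩
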